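/- Let h : ℝⁿ → ℝ be L-smooth and σ-hypoconvex with -L < σ ≤ 0. Then for all x, y ∈ ℝⁿ: ⟨∇h(y) - ∇h(x), y - x⟩ ≥ (σL/(L+σ))‖x-y‖² + (1/(L+σ))‖∇h(x) - ∇h(y)‖². -/

import Mathlib

open Set Filter
open InnerProductSpace intervalIntegral

variable {F : Type*} [NormedAddCommGroup F] [InnerProductSpace ℝ F] [CompleteSpace F]

lemma hasDerivAt_line {f : F → ℝ} {G : F → F} (hf : ∀ z, HasGradientAt f (G z) z)
    (x d : F) (t : ℝ) :
    HasDerivAt (fun s : ℝ => f (x + s • d)) (inner ℝ (G (x + t • d)) d : ℝ) t := by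
  have hline : HasDerivAt (fun s : ℝ => x + s • d) d t := by
    simpa using ((hasDerivAt_id t).smul_const d).const_add x
  have hfd : HasFDerivAt f (toDual ℝ F (G (x + t • d))) (x + t • d) :=
    (hf (x + t • d)).hasFDerivAt
  simpa [toDual_apply_apply, Function.comp_def] using hfd.comp_hasDerivAt t hline

lemma descent_lemma {f : F → ℝ} {G : F → F} {K : ℝ} (hK : 0 ≤ K)
    (hf : ∀ z, HasGradientAt f (G z) z) (hGc : Continuous G)
    (hL : ∀ a b, ‖G a - G b‖ ≤ K * ‖a - b‖) (x y : F) :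
    f y ≤ f x + inner ℝ (G x) (y - x) + K / 2 * ‖y - x‖ ^ 2 := by
  set d := y - x with hd
  have hderiv : ∀ t : ℝ, HasDerivAt (fun s : ℝ => f (x + s • d))
      (inner ℝ (G (x + t • d)) d : ℝ) t := hasDerivAt_line hf x d
  have hcont : Continuous fun t : ℝ => (inner ℝ (G (x + t • d)) d : ℝ) := by
    exact (hGc.comp (by continuity)).inner continuous_const
  have hint : ∫ t in (0:ℝ)..1, (inner ℝ (G (x + t • d)) d : ℝ) =
      f (x + (1:ℝ) • d) - f (x + (0:ℝ) • d) := by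
    exact intervalIntegral.integral_eq_sub_of_hasDerivAt (f := fun s : ℝ => f (x + s • d))
      (fun t _ => hderiv t) (hcont.intervalIntegrable 0 1)
  have key : ∫ t in (0:ℝ)..1, (inner ℝ (G (x + t • d)) d : ℝ) ≤
      ∫ t in (0:ℝ)..1, (inner ℝ (G x) d + K * t * ‖d‖ ^ 2 : ℝ) := by
    apply intervalIntegral.integral_mono_on (by norm_num)
      (hcont.intervalIntegrable 0 1) (by apply Continuous.intervalIntegrable; continuity)
    intro t ht
    have h1 : (inner ℝ (G (x + t • d)) d : ℝ) - inner ℝ (G x) d =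
        inner ℝ (G (x + t • d) - G x) d := by rw [inner_sub_left]
    have h2 : (inner ℝ (G (x + t • d) - G x) d : ℝ) ≤ ‖G (x + t • d) - G x‖ * ‖d‖ :=
      real_inner_le_norm _ _
    have h3 : ‖G (x + t • d) - G x‖ ≤ K * (t * ‖d‖) := by
      have := hL (x + t • d) x
      simpa [norm_smul, abs_of_nonneg ht.1] using this
    nlinarith [norm_nonneg d, norm_nonneg (G (x + t • d) - G x), mul_le_mul_of_nonneg_right h3 (norm_nonneg d)]
  have hval : ∫ t in (0:ℝ)..1, (inner ℝ (G x) d + K * t * ‖d‖ ^ 2 : ℝ) =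
      inner ℝ (G x) d + K / 2 * ‖d‖ ^ 2 := by
    rw [intervalIntegral.integral_add (by apply Continuous.intervalIntegrable; continuity)
      (by apply Continuous.intervalIntegrable; continuity)]
    simp only [intervalIntegral.integral_const, smul_eq_mul, mul_one, sub_zero, one_smul]
    have : ∫ t in (0:ℝ)..1, (K * t * ‖d‖ ^ 2 : ℝ) = K * ‖d‖ ^ 2 * ∫ t in (0:ℝ)..1, t := by
      rw [← intervalIntegral.integral_const_mul]; congr 1; ext t; ring
    rw [this, integral_id]; ring
  have hy : x + (1:ℝ) • d = y := by simp [hd]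
  have hx : x + (0:ℝ) • d = x := by simp
  rw [hy, hx] at hint
  linarith [key.trans_eq hval, hint]

lemma convex_first_order {f : F → ℝ} {G : F → F} (hf : ∀ z, HasGradientAt f (G z) z)
    (hconv : ConvexOn ℝ Set.univ f) (x y : F) :
    f x + inner ℝ (G x) (y - x) ≤ f y := by
  set d := y - x with hd
  have hψ : ConvexOn ℝ Set.univ fun t : ℝ => f (x + t • d) := by
    have h := hconv.comp_affineMap (AffineMap.lineMap x y : ℝ →ᵃ[ℝ] F)
    simp only [Set.preimage_univ] at h
    have heq : (fun t : ℝ => f (x + t • d)) = f ∘ (AffineMap.lineMap x y : ℝ →ᵃ[ℝ] F) := by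
      funext t
      simp [AffineMap.lineMap_apply, hd, add_comm]
    rw [heq]; exact h
  have hder : HasDerivAt (fun t : ℝ => f (x + t • d)) (inner ℝ (G x) d : ℝ) 0 := by
    simpa using hasDerivAt_line hf x d 0
  have := hψ.le_slope_of_hasDerivAt (Set.mem_univ (0:ℝ)) (Set.mem_univ (1:ℝ))
    (by norm_num) hder
  simp only [slope_def_field] at this
  have h1 : x + (1:ℝ) • d = y := by simp [hd]
  have h0 : x + (0:ℝ) • d = x := by simp
  rw [h1, h0] at this
  have this' : (inner ℝ (G x) d : ℝ) ≤ f y - f x := by simpa using this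
  linarith

lemma lower_bound {f : F → ℝ} {G : F → F} {K : ℝ} (hK : 0 < K)
    (hf : ∀ z, HasGradientAt f (G z) z) (hGc : Continuous G)
    (hL : ∀ a b, ‖G a - G b‖ ≤ K * ‖a - b‖)
    (hconv : ConvexOn ℝ Set.univ f) (x y : F) :
    f x + inner ℝ (G x) (y - x) + 1 / (2 * K) * ‖G y - G x‖ ^ 2 ≤ f y := by
  set φ : F → ℝ := fun z => f z - inner ℝ (G x) z with hφ
  set Gφ : F → F := fun z => G z - G x with hGφ
  have hgrad : ∀ z, HasGradientAt φ (Gφ z) z := by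
    intro z
    have h1 : HasFDerivAt f (toDual ℝ F (G z)) z := (hf z).hasFDerivAt
    have h2 : HasFDerivAt (fun w : F => (inner ℝ (G x) w : ℝ)) (toDual ℝ F (G x)) z :=
      (toDual ℝ F (G x)).hasFDerivAt
    have := h1.sub h2
    rw [hasGradientAt_iff_hasFDerivAt]
    refine this.congr_fderiv ?_
    simp [hGφ, map_sub]
  have hGφc : Continuous Gφ := hGc.sub continuous_const
  have hLφ : ∀ a b, ‖Gφ a - Gφ b‖ ≤ K * ‖a - b‖ := by
    intro a b; simpa [hGφ] using hL a b
  have hφconv : ConvexOn ℝ Set.univ φ := by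
    apply hconv.sub
    have : ConcaveOn ℝ Set.univ fun z : F => (inner ℝ (G x) z : ℝ) := by
      constructor
      · exact convex_univ
      · intro a _ b _ p q _ _ _
        simp [inner_add_right, inner_smul_right]
    exact this
  have hmin : ∀ z, φ x ≤ φ z := by
    intro z
    have := convex_first_order hgrad hφconv x z
    simpa [hGφ] using this
  -- descent step from y
  have hdes := descent_lemma hK.le hgrad hGφc hLφ y (y - K⁻¹ • Gφ y)
  have hstep : (y - K⁻¹ • Gφ y) - y = -(K⁻¹ • Gφ y) := by abel
  rw [hstep] at hdes
  have hinner : (inner ℝ (Gφ y) (-(K⁻¹ • Gφ y)) : ℝ) = -(K⁻¹ * ‖Gφ y‖ ^ 2) := by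
    rw [inner_neg_right, real_inner_smul_right, real_inner_self_eq_norm_sq]
  have hnorm : ‖-(K⁻¹ • Gφ y)‖ ^ 2 = K⁻¹ ^ 2 * ‖Gφ y‖ ^ 2 := by
    rw [norm_neg, norm_smul]
    simp [abs_of_nonneg (inv_nonneg.mpr hK.le), mul_pow]
  rw [hinner, hnorm] at hdes
  have hKne : K ≠ 0 := hK.ne'
  have h2 : φ (y - K⁻¹ • Gφ y) ≤ φ y - 1 / (2 * K) * ‖Gφ y‖ ^ 2 := by
    have e4 : K / 2 * (K⁻¹ ^ 2 * ‖Gφ y‖ ^ 2) = 1 / (2 * K) * ‖Gφ y‖ ^ 2 := by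
      field_simp
    have e5 : K⁻¹ * ‖Gφ y‖ ^ 2 = 2 * (1 / (2 * K) * ‖Gφ y‖ ^ 2) := by
      field_simp
    linarith [hdes]
  have h3 := (hmin (y - K⁻¹ • Gφ y)).trans h2
  simp only [hφ, hGφ] at h3
  have hexp : (inner ℝ (G x) (y - x) : ℝ) = inner ℝ (G x) y - inner ℝ (G x) x := by
    rw [inner_sub_right]
  linarith [h3, hexp.le, hexp.ge]

lemma cocoercivity {f : F → ℝ} {G : F → F} {K : ℝ} (hK : 0 < K)
    (hf : ∀ z, HasGradientAt f (G z) z) (hGc : Continuous G)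
    (hL : ∀ a b, ‖G a - G b‖ ≤ K * ‖a - b‖)
    (hconv : ConvexOn ℝ Set.univ f) (x y : F) :
    (1 / K) * ‖G y - G x‖ ^ 2 ≤ inner ℝ (G y - G x) (y - x) := by
  have h1 := lower_bound hK hf hGc hL hconv x y
  have h2 := lower_bound hK hf hGc hL hconv y x
  have e1 : (inner ℝ (G y - G x) (y - x) : ℝ) = inner ℝ (G y) (y - x) - inner ℝ (G x) (y - x) := by
    rw [inner_sub_left]
  have e2 : (inner ℝ (G y) (x - y) : ℝ) = -inner ℝ (G y) (y - x) := by
    rw [← inner_neg_right]; congr 1; abel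
  have e3 : ‖G x - G y‖ = ‖G y - G x‖ := norm_sub_rev _ _
  rw [e2, e3] at h2
  rw [e1]
  have hsum : 1 / (2 * K) * ‖G y - G x‖ ^ 2 + 1 / (2 * K) * ‖G y - G x‖ ^ 2
      = 1 / K * ‖G y - G x‖ ^ 2 := by
    rw [← add_mul]
    congr 1
    rw [← add_div, div_eq_div_iff (by positivity) hK.ne']
    ring
  linarith [h1, h2]

/-- If `h` is `L`-smooth and `σ`-hypoconvex with `-L < σ ≤ 0`, then for all `x, y`:
`⟪∇h y - ∇h x, y - x⟫ ≥ (σL/(L+σ))‖x-y‖² + (1/(L+σ))‖∇h x - ∇h y‖²`. -/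
theorem gradient_cocoercivity_hypoconvex {n : ℕ} (h : EuclideanSpace ℝ (Fin n) → ℝ)
    (L σ : ℝ) (hσ1 : -L < σ) (hσ2 : σ ≤ 0)
    (hC1 : ContDiff ℝ 1 h)
    (hLip : ∀ x y, ‖gradient h x - gradient h y‖ ≤ L * ‖x - y‖)
    (hhyp : ConvexOn ℝ Set.univ (fun x => h x - σ / 2 * ‖x‖ ^ 2)) :
    ∀ x y, (inner ℝ (gradient h y - gradient h x) (y - x) : ℝ) ≥
      σ * L / (L + σ) * ‖x - y‖ ^ 2 + 1 / (L + σ) * ‖gradient h x - gradient h y‖ ^ 2 := by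
  intro x y
  have hdiff : Differentiable ℝ h := hC1.differentiable one_ne_zero
  have hgradh : ∀ z, HasGradientAt h (gradient h z) z := fun z => (hdiff z).hasGradientAt
  set g : EuclideanSpace ℝ (Fin n) → ℝ := fun z => h z - σ / 2 * ‖z‖ ^ 2 with hg
  set Gg : EuclideanSpace ℝ (Fin n) → EuclideanSpace ℝ (Fin n) := fun z => gradient h z - σ • z with hGg
  set K := L - σ with hKdef
  have hKpos : 0 < K := by simp [hKdef]; linarith
  -- gradient of g
  have hgradg : ∀ z, HasGradientAt g (Gg z) z := by
    intro z
    have h1 : HasFDerivAt h (toDual ℝ (EuclideanSpace ℝ (Fin n)) (gradient h z)) z := (hgradh z).hasFDerivAt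
    have h2 : HasFDerivAt (fun w : EuclideanSpace ℝ (Fin n) => (inner ℝ w w : ℝ))
        ((fderivInnerCLM ℝ (z, z)).comp ((ContinuousLinearMap.id ℝ (EuclideanSpace ℝ (Fin n))).prod
          (ContinuousLinearMap.id ℝ (EuclideanSpace ℝ (Fin n))))) z :=
      (hasFDerivAt_id z).inner ℝ (hasFDerivAt_id z)
    have h3 : HasFDerivAt (fun w : EuclideanSpace ℝ (Fin n) => σ / 2 * (inner ℝ w w : ℝ))
        ((σ / 2) • ((fderivInnerCLM ℝ (z, z)).comp ((ContinuousLinearMap.id ℝ (EuclideanSpace ℝ (Fin n))).prod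
          (ContinuousLinearMap.id ℝ (EuclideanSpace ℝ (Fin n)))))) z := h2.const_mul (σ / 2)
    have h4 : HasFDerivAt (fun w : EuclideanSpace ℝ (Fin n) => σ / 2 * ‖w‖ ^ 2) (toDual ℝ (EuclideanSpace ℝ (Fin n)) (σ • z)) z := by
      have heq : (fun w : EuclideanSpace ℝ (Fin n) => σ / 2 * (inner ℝ w w : ℝ)) = fun w : EuclideanSpace ℝ (Fin n) => σ / 2 * ‖w‖ ^ 2 := by
        funext w; rw [real_inner_self_eq_norm_sq]
      rw [heq] at h3
      refine h3.congr_fderiv ?_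
      apply ContinuousLinearMap.ext
      intro v
      simp only [toDual_apply_apply, ContinuousLinearMap.coe_smul', Pi.smul_apply,
        ContinuousLinearMap.coe_comp', Function.comp_apply, ContinuousLinearMap.prod_apply,
        ContinuousLinearMap.coe_id', id_eq, fderivInnerCLM_apply, smul_eq_mul]
      rw [real_inner_smul_left, real_inner_comm v z]
      ring
    rw [hasGradientAt_iff_hasFDerivAt]
    refine (h1.sub h4).congr_fderiv ?_
    simp [hGg, map_sub]
  -- Lipschitz bound for Gg
  have hLg : ∀ a b, ‖Gg a - Gg b‖ ≤ K * ‖a - b‖ := by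
    intro a b
    have e : Gg a - Gg b = (gradient h a - gradient h b) - σ • (a - b) := by
      simp only [hGg, smul_sub]; abel
    rw [e]
    calc ‖(gradient h a - gradient h b) - σ • (a - b)‖
        ≤ ‖gradient h a - gradient h b‖ + ‖σ • (a - b)‖ := norm_sub_le _ _
      _ ≤ L * ‖a - b‖ + (-σ) * ‖a - b‖ := by
          apply add_le_add (hLip a b)
          rw [norm_smul, Real.norm_eq_abs, abs_of_nonpos hσ2]
      _ = K * ‖a - b‖ := by rw [hKdef]; ring
  -- Continuity of Gg
  have hGgc : Continuous Gg := by
    refine (LipschitzWith.of_dist_le_mul (K := ⟨K, hKpos.le⟩) (f := Gg) ?_).continuous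
    intro a b
    rw [dist_eq_norm, dist_eq_norm]; exact hLg a b
  -- cocoercivity of convex g
  have hco := cocoercivity hKpos hgradg hGgc hLg hhyp x y
  -- expand
  set u := gradient h y - gradient h x with hu
  set d := y - x with hd
  have e0 : Gg y - Gg x = u - σ • d := by
    simp only [hGg, hu, hd, smul_sub]; abel
  rw [e0] at hco
  have e1 : (inner ℝ (u - σ • d) d : ℝ) = inner ℝ u d - σ * ‖d‖ ^ 2 := by
    rw [inner_sub_left, real_inner_smul_left, real_inner_self_eq_norm_sq]
  have e2 : ‖u - σ • d‖ ^ 2 = ‖u‖ ^ 2 - 2 * (σ * inner ℝ u d) + σ ^ 2 * ‖d‖ ^ 2 := by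
    rw [norm_sub_sq_real, real_inner_smul_right, norm_smul, Real.norm_eq_abs, mul_pow, sq_abs]
  rw [e1, e2] at hco
  have h5 : ‖u‖ ^ 2 - 2 * (σ * inner ℝ u d) + σ ^ 2 * ‖d‖ ^ 2 ≤ K * (inner ℝ u d - σ * ‖d‖ ^ 2) := by
    have := mul_le_mul_of_nonneg_left hco hKpos.le
    have hsimp : K * (1 / K * (‖u‖ ^ 2 - 2 * (σ * inner ℝ u d) + σ ^ 2 * ‖d‖ ^ 2))
        = ‖u‖ ^ 2 - 2 * (σ * inner ℝ u d) + σ ^ 2 * ‖d‖ ^ 2 := by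
      field_simp
    calc ‖u‖ ^ 2 - 2 * (σ * inner ℝ u d) + σ ^ 2 * ‖d‖ ^ 2
        = K * (1 / K * (‖u‖ ^ 2 - 2 * (σ * inner ℝ u d) + σ ^ 2 * ‖d‖ ^ 2)) := hsimp.symm
      _ ≤ K * (inner ℝ u d - σ * ‖d‖ ^ 2) := this
  have h6 : σ * L * ‖d‖ ^ 2 + ‖u‖ ^ 2 ≤ (L + σ) * inner ℝ u d := by
    rw [hKdef] at h5; nlinarith [h5]
  have hLσ : 0 < L + σ := by linarith
  have e3 : ‖x - y‖ = ‖d‖ := by rw [hd, norm_sub_rev]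
  have e4 : ‖gradient h x - gradient h y‖ = ‖u‖ := by rw [hu, norm_sub_rev]
  rw [ge_iff_le, e3, e4]
  calc σ * L / (L + σ) * ‖d‖ ^ 2 + 1 / (L + σ) * ‖u‖ ^ 2
      = (σ * L * ‖d‖ ^ 2 + ‖u‖ ^ 2) / (L + σ) := by ring
    _ ≤ inner ℝ u d := by rw [div_le_iff₀ hLσ]; nlinarith [h6]
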